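/- For every ν ∈ X^*(Ť_N) and every i = 1,…,r, the integer ⟨ν, α̌_i⟩ is divisible by δ_i; equivalently, the rescaled simple root α̌_i/δ_i (a simple coroot of the dual group Ǧ_N in Theorem 1) defines a ℤ-valued linear functional on X^*(Ť_N). -/

import Mathlib

open Module Finset

/-- A finite reduced irreducible root system, encoded by its (finite) set of coroots
`coroots ⊆ V` together with the bijection `rt : α ↦ α̌` from coroots to roots
(elements of the dual space `V^*`), satisfying `⟨α, α̌⟩ = rt α α = 2`.
The canonical pairing `⟨·,·⟩ : V × V^* → ℚ` is function application. -/
structure IrredRootSystem (V : Type*) [AddCommGroup V] [Module ℚ V] where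
  /-- the set `R_*` of coroots -/
  coroots : Finset V
  ne_zero : (0 : V) ∉ coroots
  nonempty : coroots.Nonempty
  /-- the coroots span `V` -/
  span_eq_top : Submodule.span ℚ (coroots : Set V) = ⊤
  /-- the bijection `α ↦ α̌` from coroots to roots; `R^* = rt '' coroots` -/
  rt : V → Module.Dual ℚ V
  /-- the roots span `V^*` -/
  span_rt_eq_top : Submodule.span ℚ (rt '' (coroots : Set V)) = ⊤
  rt_self : ∀ α ∈ coroots, rt α α = 2
  rt_injOn : Set.InjOn rt (coroots : Set V)
  neg_mem : ∀ α ∈ coroots, -α ∈ coroots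
  rt_neg : ∀ α ∈ coroots, rt (-α) = - rt α
  /-- crystallographic condition: `⟨α, β̌⟩ ∈ ℤ` -/
  crystallographic : ∀ α ∈ coroots, ∀ β ∈ coroots, ∃ n : ℤ, rt β α = (n : ℚ)
  /-- reducedness -/
  reduced : ∀ α ∈ coroots, ∀ c : ℚ, c • α ∈ coroots → c = 1 ∨ c = -1
  /-- the reflection `s_α : x ↦ x - ⟨x, α̌⟩ α` preserves the set of coroots -/
  reflect_mem : ∀ α ∈ coroots, ∀ β ∈ coroots, β - rt α β • α ∈ coroots
  /-- irreducibility: no nontrivial orthogonal decomposition of the coroots -/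
  irreducible : ∀ s : Finset V, s ⊆ coroots →
    (∀ α ∈ s, ∀ β ∈ coroots, β ∉ s → rt β α = 0) → s = ∅ ∨ s = coroots

namespace IrredRootSystem

variable {V : Type*} [AddCommGroup V] [Module ℚ V]

/-- The Weyl group `W ⊆ GL(V)`: the subgroup generated by the reflections
`s_α : x ↦ x - ⟨x, α̌⟩ α` in the coroots `α`. -/
def weylGroup (P : IrredRootSystem V) : Subgroup (V ≃ₗ[ℚ] V) :=
  Subgroup.closure { w : V ≃ₗ[ℚ] V | ∃ α ∈ P.coroots, ∀ x : V, w x = x - P.rt α x • α }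

/-- Invariance of a bilinear form under the Weyl group. -/
def WInvar (P : IrredRootSystem V) (B : V →ₗ[ℚ] V →ₗ[ℚ] ℚ) : Prop :=
  ∀ w ∈ P.weylGroup, ∀ x y : V, B (w x) (w y) = B x y

/-- `α` is a short coroot: a coroot of minimal length with respect to a(ny)
`W`-invariant inner product (symmetric positive-definite bilinear form) on `V`. -/
def IsShort (P : IrredRootSystem V) (α : V) : Prop :=
  α ∈ P.coroots ∧ ∀ B : V →ₗ[ℚ] V →ₗ[ℚ] ℚ, (∀ x y : V, B x y = B y x) →
    P.WInvar B → (∀ x : V, x ≠ 0 → 0 < B x x) → ∀ β ∈ P.coroots, B α α ≤ B β β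

/-- The conditions characterizing the bilinear form `(·,·)`: symmetric,
`W`-invariant, and `(α, α) = 2` for every short coroot `α`. -/
def IsNormForm (P : IrredRootSystem V) (B : V →ₗ[ℚ] V →ₗ[ℚ] ℚ) : Prop :=
  (∀ x y : V, B x y = B y x) ∧ P.WInvar B ∧ ∀ α : V, P.IsShort α → B α α = 2

end IrredRootSystem

/-- A base of the root system: simple coroots `sc 1, …, sc r` (with corresponding
simple roots `rt (sc i)`), the subset `pos ⊆ coroots` consisting of the coroots of
the positive roots `R^{*+}` (so `R^{*+} = rt '' pos`), and the coroot `hc = θ̌` of the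
highest root `θ = rt hc`. -/
structure BaseData {V : Type*} [AddCommGroup V] [Module ℚ V] (P : IrredRootSystem V) where
  r : ℕ
  sc : Fin r → V
  sc_mem : ∀ i, sc i ∈ P.coroots
  sc_inj : Function.Injective sc
  pos : Finset V
  pos_sub : pos ⊆ P.coroots
  sc_pos : ∀ i, sc i ∈ pos
  /-- every root is either positive or negative, not both -/
  pos_or_neg : ∀ α ∈ P.coroots, (α ∈ pos ∧ -α ∉ pos) ∨ (α ∉ pos ∧ -α ∈ pos)
  /-- every positive root is a nonnegative integral combination of the simple roots -/
  pos_decomp : ∀ α ∈ pos, ∃ c : Fin r → ℕ, P.rt α = ∑ i, (c i : ℚ) • P.rt (sc i)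
  hc : V
  hc_mem : hc ∈ pos
  /-- `rt hc` is the highest root: it dominates every root -/
  hc_highest : ∀ α ∈ P.coroots, ∃ c : Fin r → ℕ,
    P.rt hc - P.rt α = ∑ i, (c i : ℚ) • P.rt (sc i)

namespace BaseData

variable {V : Type*} [AddCommGroup V] [Module ℚ V] {P : IrredRootSystem V}

/-- `ρ ∈ V^*`, the half-sum of the positive roots. -/
noncomputable def rho (Ba : BaseData P) : Module.Dual ℚ V :=
  (1/2 : ℚ) • ∑ α ∈ Ba.pos, P.rt α

/-- The dual Coxeter number `ȟ = 1 + ⟨θ̌, ρ⟩`. -/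
noncomputable def dualCox (Ba : BaseData P) : ℚ := 1 + Ba.rho Ba.hc

end BaseData

/-- `X^*(T) = {x ∈ V^* : ⟨λ, x⟩ ∈ ℤ for all λ ∈ L}`, the dual lattice of `L`. -/
def dualLat {V : Type*} [AddCommGroup V] [Module ℚ V] (L : AddSubgroup V) :
    Set (Module.Dual ℚ V) :=
  { x | ∀ lam ∈ L, ∃ n : ℤ, x lam = (n : ℚ) }

/-- `X^*(Ť_N) = {ν ∈ X_*(T) : d·ι(ν) ∈ N·X^*(T)}`, where `ι = B.flip`, i.e.
`(ι y) x = B x y`. -/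
def TwN {V : Type*} [AddCommGroup V] [Module ℚ V] (B : V →ₗ[ℚ] V →ₗ[ℚ] ℚ)
    (L : AddSubgroup V) (d N : ℕ) : Set V :=
  { ν | ν ∈ L ∧ ∃ y ∈ dualLat L, (d : ℚ) • (LinearMap.flip B) ν = (N : ℚ) • y }

section AuxRefl

variable {V : Type*} [AddCommGroup V] [Module ℚ V]

/-- The reflection `s_α` as a linear map. -/
noncomputable def reflMap (P : IrredRootSystem V) (α : V) : V →ₗ[ℚ] V :=
  LinearMap.id - (P.rt α).smulRight α

lemma reflMap_apply (P : IrredRootSystem V) (α x : V) :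
    reflMap P α x = x - P.rt α x • α := rfl

lemma reflMap_invol (P : IrredRootSystem V) {α : V} (h2 : P.rt α α = 2) (x : V) :
    reflMap P α (reflMap P α x) = x := by
  simp only [reflMap_apply, map_sub, map_smul, smul_eq_mul, h2]
  module

/-- The reflection `s_α` as a linear equivalence. -/
noncomputable def reflEquiv (P : IrredRootSystem V) (α : V) (h2 : P.rt α α = 2) :
    V ≃ₗ[ℚ] V :=
  LinearEquiv.ofLinear (reflMap P α) (reflMap P α)
    (LinearMap.ext fun x => reflMap_invol P h2 x)
    (LinearMap.ext fun x => reflMap_invol P h2 x)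

lemma key_form (P : IrredRootSystem V) (B : V →ₗ[ℚ] V →ₗ[ℚ] ℚ)
    (hsym : ∀ x y : V, B x y = B y x) (hinv : P.WInvar B)
    {α : V} (hα : α ∈ P.coroots) (x : V) :
    2 * B x α = P.rt α x * B α α := by
  have h2 := P.rt_self α hα
  have hs : reflEquiv P α h2 ∈ P.weylGroup :=
    Subgroup.subset_closure ⟨α, hα, fun x => rfl⟩
  have h := hinv _ hs x α
  have hsx : reflEquiv P α h2 x = x - P.rt α x • α := rfl
  have hsα : reflEquiv P α h2 α = -α := by
    show α - P.rt α α • α = -α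
    rw [h2]; module
  rw [hsx, hsα] at h
  have hexp : B (x - P.rt α x • α) (-α)
      = -(B x α) + P.rt α x * B α α := by
    simp only [map_sub, map_smul, map_neg, LinearMap.sub_apply, LinearMap.smul_apply,
      smul_eq_mul]
    ring
  rw [hexp] at h
  linarith

end AuxRefl

lemma denom_dvd {q : ℚ} {δ : ℕ}
    (hδ : IsLeast {m : ℕ | 0 < m ∧ ∃ k : ℤ, (m : ℚ) * q = (k : ℚ)} δ)
    {n m : ℤ} (hn : (n : ℚ) * q = (m : ℚ)) : (δ : ℤ) ∣ n := by
  obtain ⟨⟨hδpos, k, hk⟩, hmin⟩ := hδ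
  set g : ℕ := Int.gcd n (δ : ℤ) with hg
  have hgpos : 0 < g := by
    have : (δ : ℤ) ≠ 0 := by exact_mod_cast hδpos.ne'
    exact Int.gcd_pos_iff.mpr (Or.inr this)
  have hbez : (g : ℤ) = n * Int.gcdA n (δ : ℤ) + (δ : ℤ) * Int.gcdB n (δ : ℤ) :=
    Int.gcd_eq_gcd_ab n (δ : ℤ)
  have hcast : (g : ℚ) = (n : ℚ) * (Int.gcdA n (δ : ℤ) : ℚ)
      + (δ : ℚ) * (Int.gcdB n (δ : ℤ) : ℚ) := by exact_mod_cast hbez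
  have hgq : (g : ℚ) * q = ((Int.gcdA n (δ : ℤ) * m + Int.gcdB n (δ : ℤ) * k : ℤ) : ℚ) := by
    push_cast
    rw [hcast]
    linear_combination (Int.gcdA n (δ : ℤ) : ℚ) * hn + (Int.gcdB n (δ : ℤ) : ℚ) * hk
  have hδle : δ ≤ g := hmin ⟨hgpos, _, hgq⟩
  have hgdvd : g ∣ δ := Int.ofNat_dvd.mp (Int.gcd_dvd_right (a := n) (b := (δ : ℤ)))
  have hgle : g ≤ δ := Nat.le_of_dvd hδpos hgdvd
  have hgδ : g = δ := le_antisymm hgle hδle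
  have hfin : ((Int.gcd n (δ : ℤ) : ℤ)) ∣ n := Int.gcd_dvd_left n (δ : ℤ)
  rwa [← hg, hgδ] at hfin

variable {V : Type*} [AddCommGroup V] [Module ℚ V] [FiniteDimensional ℚ V]

/-- for every `ν ∈ X^*(Ť_N)` and every `i`, the integer `⟨ν, α̌_i⟩` is
divisible by `δ_i`. -/
theorem stmt_9 (P : IrredRootSystem V) (Ba : BaseData P)
    (B : V →ₗ[ℚ] V →ₗ[ℚ] ℚ) (hB : P.IsNormForm B) (L : AddSubgroup V)
    (hL1 : ∀ α ∈ P.coroots, α ∈ L)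
    (hL2 : ∀ lam ∈ L, ∀ α ∈ P.coroots, ∃ n : ℤ, P.rt α lam = (n : ℚ))
    (d : ℕ)
    (hd : IsLeast {n : ℕ | 0 < n ∧
      ∀ lam ∈ L, (n : ℚ) • (LinearMap.flip B) lam ∈ dualLat L} d)
    (N : ℕ) (hN : 0 < N)
    (δ : Fin Ba.r → ℕ)
    (hδ : ∀ i, IsLeast {m : ℕ | 0 < m ∧
      ∃ k : ℤ, (m : ℚ) * ((d : ℚ) * B (Ba.sc i) (Ba.sc i) / (2 * (N : ℚ))) = (k : ℚ)}
      (δ i))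
    (ν : V) (hν : ν ∈ TwN B L d N) (i : Fin Ba.r) :
    ∃ k : ℤ, P.rt (Ba.sc i) ν = (δ i : ℚ) * (k : ℚ) := by
  obtain ⟨hνL, y, hy, heq⟩ := hν
  set α := Ba.sc i with hαdef
  have hα : α ∈ P.coroots := Ba.sc_mem i
  obtain ⟨n, hn⟩ := hL2 ν hνL α hα
  obtain ⟨m, hm⟩ := hy α (hL1 α hα)
  have heval : (d : ℚ) * B α ν = (N : ℚ) * y α := by
    have := congrArg (fun f : Module.Dual ℚ V => f α) heq
    simpa using this
  have hkey : 2 * B ν α = P.rt α ν * B α α :=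
    key_form P B hB.1 hB.2.1 hα ν
  -- hence n * q = m where q = d*B α α/(2N)
  have hq : (n : ℚ) * ((d : ℚ) * B α α / (2 * (N : ℚ))) = (m : ℚ) := by
    have hN' : (N : ℚ) ≠ 0 := by exact_mod_cast hN.ne'
    have h1 : (d : ℚ) * ((n : ℚ) * B α α / 2) = (N : ℚ) * (m : ℚ) := by
      rw [← hm, ← heval, hB.1 α ν]
      rw [hn] at hkey
      field_simp
      linear_combination (-(d : ℚ)) * hkey
    field_simp at h1 ⊢
    linear_combination h1
  have hdvd : ((δ i : ℤ)) ∣ n := denom_dvd (hδ i) hq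
  obtain ⟨k, hk⟩ := hdvd
  exact ⟨k, by rw [hn, hk]; push_cast; ring⟩
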